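/- arXiv:2205.05546 — 7 statements merged into one kernel-verified Lean document; each statement's English description precedes it below -/
import Mathlib

section
/- Let X = [x̲, x̄], φ : X → X continuous, U : X → ℝ continuous and quasi-convex. If x* ∈ X satisfies U(x*) < U(c) for every fixed point c of φ, then either φ(x) > x for all x in the lower contour set L := {x : U(x) ≤ U(x*)}, or φ(x) < x for all x ∈ L. -/
/-- With quasi-convex `U` and no fixed point of `φ` in the lower contour set
of `x*`, the sign of `φ(x) − x` is constant on that lower contour set. -/
theorem stmt_5 (xl xu : ℝ) (φ U : ℝ → ℝ)
    (hφcont : ContinuousOn φ (Set.Icc xl xu))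
    (hφmaps : ∀ x ∈ Set.Icc xl xu, φ x ∈ Set.Icc xl xu)
    (hUcont : ContinuousOn U (Set.Icc xl xu))
    (hUqc : QuasiconvexOn ℝ (Set.Icc xl xu) U)
    (xstar : ℝ) (hxstar : xstar ∈ Set.Icc xl xu)
    (hlt : ∀ c ∈ Set.Icc xl xu, φ c = c → U xstar < U c) :
    (∀ x ∈ Set.Icc xl xu, U x ≤ U xstar → x < φ x) ∨
    (∀ x ∈ Set.Icc xl xu, U x ≤ U xstar → φ x < x) := by
  -- no fixed point in the lower contour set
  have hnofix : ∀ x ∈ Set.Icc xl xu, U x ≤ U xstar → φ x ≠ x := by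
    intro x hx hUx hfix
    exact absurd (hlt x hx hfix) (not_lt.mpr (hfix ▸ hUx))
  by_contra h
  push_neg at h
  obtain ⟨⟨a, ha, haU, haφ⟩, ⟨b, hb, hbU, hbφ⟩⟩ := h
  have haφ' : φ a < a := lt_of_le_of_ne haφ (hnofix a ha haU)
  have hbφ' : b < φ b := lt_of_le_of_ne hbφ (Ne.symm (hnofix b hb hbU))
  -- the lower contour set is convex
  have hLconv : Convex ℝ {x ∈ Set.Icc xl xu | U x ≤ U xstar} := hUqc (U xstar)
  have haL : a ∈ {x ∈ Set.Icc xl xu | U x ≤ U xstar} := ⟨ha, haU⟩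
  have hbL : b ∈ {x ∈ Set.Icc xl xu | U x ≤ U xstar} := ⟨hb, hbU⟩
  have hsub : Set.uIcc a b ⊆ {x ∈ Set.Icc xl xu | U x ≤ U xstar} :=
    hLconv.ordConnected.uIcc_subset haL hbL
  have hsubIcc : Set.uIcc a b ⊆ Set.Icc xl xu := fun x hx => (hsub hx).1
  -- IVT for g = φ - id
  have hg : ContinuousOn (fun x => φ x - x) (Set.uIcc a b) :=
    (hφcont.mono hsubIcc).sub continuousOn_id
  have h0 : (0 : ℝ) ∈ Set.uIcc (φ a - a) (φ b - b) :=
    Set.mem_uIcc.mpr (Or.inl ⟨le_of_lt (by linarith), le_of_lt (by linarith)⟩)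
  obtain ⟨c, hc, hc0⟩ := intermediate_value_uIcc hg h0
  have hcL := hsub hc
  have hfix : φ c = c := by dsimp at hc0; linarith
  exact absurd (hlt c hcL.1 hfix) (not_lt.mpr (hfix ▸ hcL.2))
end

section
/- Suppose u : X × Y → ℝ is C², R_F : X → Y is nondecreasing, u is strictly increasing in its second argument (u₂ > 0), u(·, y) is strictly concave for each y, and φ(x) := the unique maximizer of u(·, R_F(x)) satisfies φ(x) > x for all x < x_C, where x_C ∈ int X. Then U(x) := u(x, R_F(x)) is strictly increasing on [x̲, x_C]. -/
/-- A strictly concave function on `Icc xl xu` with strict maximizer `m` is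
strictly increasing to the left of `m`. -/
lemma aux_concave_incr {xl xu m : ℝ} {f : ℝ → ℝ}
    (hc : StrictConcaveOn ℝ (Set.Icc xl xu) f)
    (hm : m ∈ Set.Icc xl xu)
    (hmax : ∀ z ∈ Set.Icc xl xu, z ≠ m → f z < f m)
    {x1 x2 : ℝ} (h1 : x1 ∈ Set.Icc xl xu) (h2 : x2 ∈ Set.Icc xl xu)
    (hlt : x1 < x2) (hle : x2 ≤ m) : f x1 < f x2 := by
  rcases eq_or_lt_of_le hle with rfl | hlt2
  · exact hmax x1 h1 hlt.ne
  · have hne : x1 ≠ m := (hlt.trans hlt2).ne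
    have hfm : f x1 < f m := hmax x1 h1 hne
    have hden : 0 < m - x1 := by linarith
    set t := (m - x2) / (m - x1) with ht_def
    set s := (x2 - x1) / (m - x1) with hs_def
    have ht : 0 < t := div_pos (by linarith) hden
    have hs : 0 < s := div_pos (by linarith) hden
    have hts : t + s = 1 := by
      rw [ht_def, hs_def]; field_simp; ring
    have hcomb : t • x1 + s • m = x2 := by
      rw [ht_def, hs_def, smul_eq_mul, smul_eq_mul]
      field_simp
      ring
    have hkey := hc.2 h1 hm hne ht hs hts
    rw [hcomb] at hkey
    have hkey' : t * f x1 + s * f m < f x2 := by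
      simpa [smul_eq_mul] using hkey
    have hsum : t * f x1 + s * f x1 = f x1 := by rw [← add_mul, hts, one_mul]
    linarith [mul_pos hs (sub_pos.mpr hfm)]

/-- Lemma A.1: with positive externalities and a nondecreasing follower best
response, the leader's reduced payoff `U` is strictly increasing below the
unique Cournot action. -/
theorem stmt_7 (xl xu y1 y2 xC : ℝ) (u : ℝ → ℝ → ℝ) (RF φ : ℝ → ℝ)
    (hC2 : ContDiff ℝ 2 (Function.uncurry u))
    (hRFmono : MonotoneOn RF (Set.Icc xl xu))
    (hRFmaps : ∀ x ∈ Set.Icc xl xu, RF x ∈ Set.Icc y1 y2)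
    (hu2 : ∀ x ∈ Set.Icc xl xu, StrictMonoOn (fun y => u x y) (Set.Icc y1 y2))
    (hconc : ∀ y ∈ Set.Icc y1 y2, StrictConcaveOn ℝ (Set.Icc xl xu) (fun x => u x y))
    (hφmax : ∀ x ∈ Set.Icc xl xu, φ x ∈ Set.Icc xl xu ∧
      ∀ z ∈ Set.Icc xl xu, z ≠ φ x → u z (RF x) < u (φ x) (RF x))
    (hxC : xC ∈ Set.Ioo xl xu)
    (hφgt : ∀ x ∈ Set.Icc xl xu, x < xC → x < φ x) :
    StrictMonoOn (fun x => u x (RF x)) (Set.Icc xl xC) := by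
  have hxCu : xC ≤ xu := hxC.2.le
  -- key step: strict increase when the upper point is strictly below xC
  have key : ∀ p ∈ Set.Icc xl xu, ∀ q ∈ Set.Icc xl xu, p < q → q < xC →
      u p (RF p) < u q (RF q) := by
    intro p hp q hq hpq hqC
    have hpC : p < xC := hpq.trans hqC
    have hφp : p < φ p := hφgt p hp hpC
    have hφq : q < φ q := hφgt q hq hqC
    have hRF : RF p ≤ RF q := hRFmono hp hq hpq.le
    have hyp : RF p ∈ Set.Icc y1 y2 := hRFmaps p hp
    have hyq : RF q ∈ Set.Icc y1 y2 := hRFmaps q hq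
    have mono_y : ∀ x ∈ Set.Icc xl xu, u x (RF p) ≤ u x (RF q) := fun x hx =>
      (hu2 x hx).monotoneOn hyp hyq hRF
    obtain ⟨hφpmem, hφpmax⟩ := hφmax p hp
    obtain ⟨hφqmem, hφqmax⟩ := hφmax q hq
    rcases le_or_gt q (φ p) with hcase | hcase
    · calc u p (RF p) < u q (RF p) :=
            aux_concave_incr (hconc (RF p) hyp) hφpmem hφpmax hp hq hpq hcase
        _ ≤ u q (RF q) := mono_y q hq
    · have h1 : u p (RF p) < u (φ p) (RF p) := hφpmax p hp hφp.ne
      have h2 : u (φ p) (RF p) ≤ u (φ p) (RF q) := mono_y (φ p) hφpmem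
      have h3 : u (φ p) (RF q) < u q (RF q) :=
        aux_concave_incr (hconc (RF q) hyq) hφqmem hφqmax hφpmem hq hcase hφq.le
      linarith
  intro a ha b hb hab
  have haU : a ∈ Set.Icc xl xu := ⟨ha.1, ha.2.trans hxCu⟩
  have hbU : b ∈ Set.Icc xl xu := ⟨hb.1, hb.2.trans hxCu⟩
  rcases lt_or_eq_of_le hb.2 with hbC | hbC
  · exact key a haU b hbU hab hbC
  · -- b = xC : limit argument
    subst hbC
    set c : ℝ := (a + b) / 2 with hc_def
    have hac : a < c := by rw [hc_def]; linarith
    have hcb : c < b := by rw [hc_def]; linarith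
    have hcU : c ∈ Set.Icc xl xu := ⟨le_trans haU.1 hac.le, le_trans hcb.le hbU.2⟩
    have h1 : u a (RF a) < u c (RF c) := key a haU c hcU hac hcb
    -- show u c (RF c) ≤ u b (RF b) via limit from the left
    have hcont : Continuous (fun x => u x (RF b)) := by
      have := hC2.continuous
      exact this.comp (continuous_id.prodMk continuous_const)
    have htend : Filter.Tendsto (fun x => u x (RF b)) (nhdsWithin b (Set.Iio b))
        (nhds (u b (RF b))) :=
      (hcont.tendsto b).mono_left nhdsWithin_le_nhds
    have hev : ∀ᶠ x in nhdsWithin b (Set.Iio b), u c (RF c) ≤ u x (RF b) := by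
      filter_upwards [Ioo_mem_nhdsLT_of_mem ⟨hcb, le_refl b⟩] with x hx
      have hxU : x ∈ Set.Icc xl xu := ⟨le_trans hcU.1 hx.1.le, le_trans hx.2.le hbU.2⟩
      have hx1 : u c (RF c) < u x (RF x) := key c hcU x hxU hx.1 hx.2
      have hx2 : u x (RF x) ≤ u x (RF b) :=
        (hu2 x hxU).monotoneOn (hRFmaps x hxU) (hRFmaps b hbU)
          (hRFmono hxU hbU hx.2.le)
      linarith
    have : (nhdsWithin b (Set.Iio b)).NeBot := by
      haveI : Fact (xl < b) := ⟨lt_of_lt_of_le hxC.1 hb.2⟩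
      infer_instance
    have h2 : u c (RF c) ≤ u b (RF b) := ge_of_tendsto htend hev
    exact lt_of_lt_of_le h1 h2
end

section
/- Suppose u₂ > 0 and R_F is nondecreasing. Let (K, β) be an admissible pair implementing action x*, meaning: every X_i ∈ K satisfies β(X_i) ∈ X_i and u(x, R_F(β(X_i))) ≤ u(β(X_i), R_F(β(X_i))) for all x ∈ X_i, and U(β(X_j)) ≤ U(x*) for all X_j ∈ K. If x ∈ X satisfies U(x) > U(x*), then β(X_i) < x for every X_i ∈ K containing x. -/
/-- Lemma A.4: in an admissible pair implementing `x*`, any action with payoff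
strictly above `U(x*)` is blocked by a strictly smaller action in each element
of the commitment structure containing it. -/
theorem stmt_9 (u : ℝ → ℝ → ℝ) (RF : ℝ → ℝ)
    (hu2 : ∀ x : ℝ, StrictMono (fun y => u x y))
    (hRF : Monotone RF)
    (K : Set (Set ℝ)) (β : Set ℝ → ℝ) (xstar : ℝ)
    (hmem : ∀ Xi ∈ K, β Xi ∈ Xi)
    (hadm : ∀ Xi ∈ K, ∀ x ∈ Xi, u x (RF (β Xi)) ≤ u (β Xi) (RF (β Xi)))
    (himp : ∀ Xj ∈ K, u (β Xj) (RF (β Xj)) ≤ u xstar (RF xstar)) :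
    ∀ x : ℝ, u xstar (RF xstar) < u x (RF x) →
      ∀ Xi ∈ K, x ∈ Xi → β Xi < x := by
  intro x hx Xi hK hxXi
  by_contra h
  push_neg at h
  have h1 : u x (RF x) ≤ u x (RF (β Xi)) := (hu2 x).monotone (hRF h)
  have h2 := hadm Xi hK x hxXi
  have h3 := himp Xi hK
  linarith
end

section
/- Let η(x̃, x) := u(x̃, R_F(x)) − u(x, R_F(x)), and for each x let η(·, x) be strictly concave with unique maximizer φ(x), and suppose φ(z) > z whenever z < x_C. Define γ(z) as the unique point ≠ z with η(γ(z), z) = 0 when it exists. Let (K, β) be an admissible pair, X_i ∈ K, x ∈ X_i, and suppose β(X_i) < min{x_C, x} and γ(β(X_i)) exists. Then β(X_i) < γ(β(X_i)) ≤ x. -/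
lemma aux_strict_concave_mid {f : ℝ → ℝ} (hf : StrictConcaveOn ℝ Set.univ f)
    {p q r c : ℝ} (h1 : p < q) (h2 : q < r) (hp : c ≤ f p) (hr : c ≤ f r) :
    c < f q := by
  have hrp : (0:ℝ) < r - p := by linarith
  set a : ℝ := (r - q) / (r - p) with ha_def
  set b : ℝ := (q - p) / (r - p) with hb_def
  have ha : 0 < a := div_pos (by linarith) hrp
  have hb : 0 < b := div_pos (by linarith) hrp
  have hab : a + b = 1 := by rw [ha_def, hb_def]; field_simp; ring
  have hq : a • p + b • r = q := by
    simp only [smul_eq_mul, ha_def, hb_def]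
    field_simp
    ring
  have h := hf.2 (Set.mem_univ p) (Set.mem_univ r) (by linarith : p ≠ r) ha hb hab
  rw [hq] at h
  have h' : a * f p + b * f r < f q := by simpa [smul_eq_mul] using h
  have hcc : a * c + b * c = c := by rw [← add_mul, hab, one_mul]
  nlinarith [mul_le_mul_of_nonneg_left hp ha.le, mul_le_mul_of_nonneg_left hr hb.le]

/-- Lemma A.5: if `β(X_i) < min{x_C, x}` for some `x ∈ X_i`, the indifference
point `γ(β(X_i))` lies in `(β(X_i), x]`. -/
theorem stmt_10 (u : ℝ → ℝ → ℝ) (RF φ : ℝ → ℝ) (xC : ℝ)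
    (hconc : ∀ z : ℝ, StrictConcaveOn ℝ Set.univ
      (fun t => u t (RF z) - u z (RF z)))
    (hφmax : ∀ z t : ℝ, t ≠ φ z →
      u t (RF z) - u z (RF z) < u (φ z) (RF z) - u z (RF z))
    (hφgt : ∀ z : ℝ, z < xC → z < φ z)
    (K : Set (Set ℝ)) (β : Set ℝ → ℝ) (Xi : Set ℝ) (hXi : Xi ∈ K)
    (hβmem : β Xi ∈ Xi)
    (hadm : ∀ x' ∈ Xi, u x' (RF (β Xi)) - u (β Xi) (RF (β Xi)) ≤ 0)
    (x : ℝ) (hx : x ∈ Xi)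
    (γb : ℝ) (hγne : γb ≠ β Xi)
    (hγzero : u γb (RF (β Xi)) - u (β Xi) (RF (β Xi)) = 0)
    (hlt : β Xi < min xC x) :
    β Xi < γb ∧ γb ≤ x := by
  set b := β Xi with hb
  have hbxC : b < xC := lt_of_lt_of_le hlt (min_le_left _ _)
  have hbx : b < x := lt_of_lt_of_le hlt (min_le_right _ _)
  have hφb : b < φ b := hφgt b hbxC
  have hfφ : 0 < u (φ b) (RF b) - u b (RF b) := by
    have := hφmax b b (by linarith : b ≠ φ b)
    linarith
  have hc := hconc b
  have hγgt : b < γb := by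
    rcases lt_trichotomy γb b with h | h | h
    · exfalso
      have := aux_strict_concave_mid hc h hφb (le_of_eq hγzero.symm) hfφ.le
      linarith
    · exact absurd h hγne
    · exact h
  refine ⟨hγgt, ?_⟩
  by_contra hgx
  push_neg at hgx
  have hfx : u x (RF b) - u b (RF b) ≤ 0 := hadm x hx
  have h0 : (0:ℝ) ≤ u b (RF b) - u b (RF b) := by linarith
  have := aux_strict_concave_mid hc hbx hgx h0 (le_of_eq hγzero.symm)
  linarith
end

section
/- In the duopoly with R_F(x) = max{0, (1 − (1−d)x)/(2−r)}, the total-quantity function Q(x) = x + R_F(x) on X = [0, 2/(2−r)] satisfies: if r ≤ d + 1 then Q is nondecreasing, and if r > d + 1 then Q is quasi-convex on X with Q(0) = 1/(2−r) < Q(2/(2−r)) = 2/(2−r). Hence in both cases Q attains its maximum over any closed subset of X containing the largest element at that largest element. -/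
/-- Total quantity `Q(x) = x + R_F(x)` is maximized at the largest quantity:
nondecreasing when `r ≤ d+1`, quasi-convex with endpoint comparison otherwise. -/
theorem stmt_16 (d r : ℝ) (hd : d ∈ Set.Ico (0 : ℝ) 1) (hr : r < 2)
    (Q : ℝ → ℝ)
    (hQ : ∀ x, Q x = x + max 0 ((1 - (1 - d) * x) / (2 - r))) :
    (r ≤ d + 1 → MonotoneOn Q (Set.Icc 0 (2 / (2 - r)))) ∧
    (d + 1 < r →
      QuasiconvexOn ℝ (Set.Icc 0 (2 / (2 - r))) Q ∧
      Q 0 = 1 / (2 - r) ∧ Q (2 / (2 - r)) = 2 / (2 - r) ∧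
      Q 0 < Q (2 / (2 - r))) ∧
    (∀ S : Set ℝ, S ⊆ Set.Icc 0 (2 / (2 - r)) → IsClosed S →
      (2 / (2 - r)) ∈ S → ∀ x ∈ S, Q x ≤ Q (2 / (2 - r))) := by
  obtain ⟨hd0, hd1⟩ := hd
  have hb : (0:ℝ) < 2 - r := by linarith
  set M : ℝ := 2 / (2 - r) with hM
  have hMval : M * (2 - r) = 2 := div_mul_cancel₀ 2 hb.ne'
  have hMpos : 0 < M := by positivity
  have hQ' : ∀ x, Q x = max x ((1 + (1 + d - r) * x) / (2 - r)) := by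
    intro x
    rw [hQ x]
    have h1 : x + (1 - (1 - d) * x) / (2 - r) = (1 + (1 + d - r) * x) / (2 - r) := by
      field_simp; ring
    rw [← max_add_add_left, add_zero, h1]
  have hQ0 : Q 0 = 1 / (2 - r) := by
    rw [hQ' 0, mul_zero, add_zero]
    exact max_eq_right (by positivity)
  refine ⟨?_, ?_, ?_⟩
  · -- monotone case
    intro hrd x hx y hy hxy
    rw [hQ' x, hQ' y]
    refine max_le_max hxy ?_
    exact (div_le_div_iff_of_pos_right hb).mpr (by nlinarith)
  · -- quasiconvex case
    intro hrd
    have hQM : Q M = M := by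
      rw [hQ' M]
      apply max_eq_left
      rw [div_le_iff₀ hb]
      nlinarith [hMpos]
    refine ⟨?_, hQ0, hQM, ?_⟩
    · -- convex hence quasiconvex
      have hconv : ConvexOn ℝ (Set.Icc 0 M) Q := by
        refine ⟨convex_Icc _ _, ?_⟩
        intro x _ y _ a b ha hb' hab
        simp only [smul_eq_mul, hQ']
        have hab' : b = 1 - a := by linarith
        subst hab'
        apply max_le
        · have h1 : x ≤ max x ((1 + (1 + d - r) * x) / (2 - r)) := le_max_left _ _
          have h2 : y ≤ max y ((1 + (1 + d - r) * y) / (2 - r)) := le_max_left _ _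
          nlinarith [mul_le_mul_of_nonneg_left h1 ha, mul_le_mul_of_nonneg_left h2 hb']
        · have h1 : (1 + (1 + d - r) * x) / (2 - r) ≤ max x ((1 + (1 + d - r) * x) / (2 - r)) :=
            le_max_right _ _
          have h2 : (1 + (1 + d - r) * y) / (2 - r) ≤ max y ((1 + (1 + d - r) * y) / (2 - r)) :=
            le_max_right _ _
          have heq : (1 + (1 + d - r) * (a * x + (1 - a) * y)) / (2 - r)
              = a * ((1 + (1 + d - r) * x) / (2 - r))
                + (1 - a) * ((1 + (1 + d - r) * y) / (2 - r)) := by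
            field_simp; ring
          rw [heq]
          exact add_le_add (mul_le_mul_of_nonneg_left h1 ha)
            (mul_le_mul_of_nonneg_left h2 hb')
      exact hconv.quasiconvexOn
    · rw [hQ0, hQM, hM]
      exact (div_lt_div_iff_of_pos_right hb).mpr one_lt_two
  · -- max at the largest element
    intro S hS _ _ x hxS
    obtain ⟨hx0, hxM⟩ := hS hxS
    rw [hQ' x, hQ' M]
    apply max_le
    · exact hxM.trans (le_max_left _ _)
    · rcases le_or_gt 0 (1 + d - r) with hc | hc
      · exact le_trans ((div_le_div_iff_of_pos_right hb).mpr (by nlinarith)) (le_max_right _ _)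
      · refine le_trans ?_ (le_max_left _ _)
        rw [div_le_iff₀ hb]
        nlinarith
end

section
/- Let U(x) = (2(1−r+d)x − ((2−r)² − 2(1−d)²)x²)/(2(2−r)) on [0, 1/(1−d)], with d ∈ [0,1), r < d+1 and (2−r)² − 2(1−d)² > 0. Let x_C = 1/(3−r−d). Then U'(x_C) > 0, and the equation U(x) = U(x_C) with x > x_C has the unique solution x = (2−r)²/((3−r−d)((2−r)² − 2(1−d)²)). -/
/-- Lemma B.3 computation: `U'(x_C) > 0` and the unique solution of
`U(x) = U(x_C)` above `x_C`. -/
theorem stmt_17 (d r : ℝ) (hd : d ∈ Set.Ico (0 : ℝ) 1) (hr : r < d + 1)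
    (hpos : 0 < (2 - r) ^ 2 - 2 * (1 - d) ^ 2)
    (U : ℝ → ℝ)
    (hU : ∀ x, U x = (2 * (1 - r + d) * x -
      ((2 - r) ^ 2 - 2 * (1 - d) ^ 2) * x ^ 2) / (2 * (2 - r))) :
    0 < deriv U (1 / (3 - r - d)) ∧
    (∀ x : ℝ, 1 / (3 - r - d) < x →
      (U x = U (1 / (3 - r - d)) ↔
        x = (2 - r) ^ 2 / ((3 - r - d) * ((2 - r) ^ 2 - 2 * (1 - d) ^ 2)))) := by
  obtain ⟨hd0, hd1⟩ := hd
  have hr2 : (0:ℝ) < 2 - r := by linarith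
  have hs : (0:ℝ) < 3 - r - d := by linarith
  have hA : (0:ℝ) < (2 - r) ^ 2 - 2 * (1 - d) ^ 2 := hpos
  have hUf : U = fun x => (2 * (1 - r + d) * x -
      ((2 - r) ^ 2 - 2 * (1 - d) ^ 2) * x ^ 2) / (2 * (2 - r)) := funext hU
  constructor
  · have hder : ∀ x : ℝ, HasDerivAt U
        ((2 * (1 - r + d) * 1 - ((2 - r) ^ 2 - 2 * (1 - d) ^ 2) * (2 * x ^ 1))
          / (2 * (2 - r))) x := by
      intro x
      rw [hUf]
      exact (((hasDerivAt_id x).const_mul _).sub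
        (((hasDerivAt_pow 2 x).const_mul _))).div_const _
    have := (hder (1 / (3 - r - d))).deriv
    rw [this]
    have key : (2 * (1 - r + d) * 1 - ((2 - r) ^ 2 - 2 * (1 - d) ^ 2) *
        (2 * (1 / (3 - r - d)) ^ 1)) = 2 * (1 - d) ^ 2 / (3 - r - d) := by
      field_simp
      ring
    rw [key]
    have h1d : (0:ℝ) < (1 - d) ^ 2 := by nlinarith
    exact div_pos (div_pos (by nlinarith) hs) (by linarith)
  · intro x hx
    rw [hU x, hU (1 / (3 - r - d))]
    have hxne : x - 1 / (3 - r - d) ≠ 0 := by linarith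
    constructor
    · intro heq
      field_simp at heq
      have hcan : (2 * (2 - r) * (3 - r - d)) *
          (((3 - r - d) * x - 1) *
            ((3 - r - d) * ((2 - r) ^ 2 - 2 * (1 - d) ^ 2) * x - (2 - r) ^ 2)) =
          (2 * (2 - r) * (3 - r - d)) * 0 := by
        linear_combination (-(2 * (2 - r) * (3 - r - d))) * heq
      have key := mul_left_cancel₀ (by positivity) hcan
      rw [mul_eq_zero] at key
      rcases key with h | h
      · exfalso
        have : 1 / (3 - r - d) * (3 - r - d) < x * (3 - r - d) :=
          mul_lt_mul_of_pos_right hx hs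
        rw [one_div_mul_cancel (ne_of_gt hs)] at this
        nlinarith
      · rw [eq_div_iff (by positivity)]
        linarith [h]
    · intro hxeq
      subst hxeq
      field_simp
      ring
end

section
/- Let X = [x̲, x̄], let U : X → ℝ be continuous, and let φ : X → X be continuous. Suppose x* ∈ X and there exist x', x'' in the lower contour set {x : U(x) ≤ U(x*)} with φ(x') ≤ x' ≤ x'' ≤ φ(x''). Then defining K = {{x*}, [x̲, x''], [x', x̄]} and β({x*}) = x*, β([x̲, x'']) = x'', β([x', x̄]) = x', the pair (K, β) satisfies: (a) β(X_i) ∈ X_i for each X_i ∈ K; (b) if for each z with φ(z) ≥ z one has u(x, R_F(z)) ≤ u(z, R_F(z)) for all x ≤ z, and for each z with φ(z) ≤ z one has u(x, R_F(z)) ≤ u(z, R_F(z)) for all x ≥ z, then η(x, β(X_i)) ≤ 0 for all x ∈ X_i and all X_i ∈ K; and (c) U(β(X_i)) ≤ U(x*) for all X_i ∈ K. -/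
/-- The explicit construction proving the `if` direction of Theorem 2
(I-plausibility): with `x', x''` in the lower contour set of `x*` satisfying
`φ(x') ≤ x' ≤ x'' ≤ φ(x'')`, the pair `(K, β)` with
`K = {{x*}, [x̲, x''], [x', x̄]}`, `β({x*}) = x*`, `β([x̲, x'']) = x''`,
`β([x', x̄]) = x'` is admissible and implements `x*`. -/
theorem stmt_19 (xl xu xstar x' x'' : ℝ)
    (U : ℝ → ℝ) (u : ℝ → ℝ → ℝ) (RF φ : ℝ → ℝ)
    (hxstar : xstar ∈ Set.Icc xl xu)
    (hx' : x' ∈ Set.Icc xl xu) (hx'' : x'' ∈ Set.Icc xl xu)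
    (hU' : U x' ≤ U xstar) (hU'' : U x'' ≤ U xstar)
    (h1 : φ x' ≤ x') (h2 : x' ≤ x'') (h3 : x'' ≤ φ x'')
    (K : Set (Set ℝ))
    (hK : K = {{xstar}, Set.Icc xl x'', Set.Icc x' xu})
    (β : Set ℝ → ℝ)
    (hβ1 : β {xstar} = xstar)
    (hβ2 : β (Set.Icc xl x'') = x'')
    (hβ3 : β (Set.Icc x' xu) = x') :
    (∀ Xi ∈ K, β Xi ∈ Xi) ∧
    ((∀ z : ℝ, z ≤ φ z → ∀ x ≤ z, u x (RF z) ≤ u z (RF z)) →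
     (∀ z : ℝ, φ z ≤ z → ∀ x, z ≤ x → u x (RF z) ≤ u z (RF z)) →
      ∀ Xi ∈ K, ∀ x ∈ Xi, u x (RF (β Xi)) - u (β Xi) (RF (β Xi)) ≤ 0) ∧
    (∀ Xi ∈ K, U (β Xi) ≤ U xstar) := by
  subst hK
  refine ⟨?_, ?_, ?_⟩
  · rintro Xi (rfl | rfl | rfl)
    · rw [hβ1]; exact rfl
    · rw [hβ2]; exact ⟨hx''.1, le_refl _⟩
    · rw [hβ3]; exact ⟨le_refl _, hx'.2⟩
  · intro hA hB Xi hXi x hx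
    rcases hXi with rfl | rfl | rfl
    · rw [hβ1] at *
      rcases hx with rfl
      simp
    · rw [hβ2] at *
      have := hA x'' h3 x hx.2
      linarith
    · rw [hβ3] at *
      have := hB x' h1 x hx.1
      linarith
  · rintro Xi (rfl | rfl | rfl)
    · rw [hβ1]
    · rw [hβ2]; exact hU''
    · rw [hβ3]; exact hU'
end
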